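/- Let a route consist of k maximal sections where section j has length L_j and minimal per-section pump requirement n_j computed from its own pressure profile, and suppose each section's inlet is at pressure p_max (enforced by a boundary pump or source). Then the total number of pumps needed for the whole route is Σ n_j, and this equals the minimum over all pump placements respecting the section boundaries; moreover Σ n_j ≥ ⌈(Σ L_j)·γ/(p_max − p_min)⌉ − 1, the bound for the undivided route, with equality when all section lengths are integer multiples of (p_max − p_min)/γ. -/
import Mathlib


open Finset

/-- Segmentation-based pump optimization under the linear loss model (rate
`γ`, window `[p_min, p_max]`, pumps restore to `p_max`, spacing at most
`D = (p_max - p_min)/γ`).  A route is divided into `k` sections of lengths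
`L j > 0`; each interior section boundary carries a boundary pump enforcing
inlet pressure `p_max`.  Attributing to section `j` its interior pumps plus
(for `j ≠ 0`) its inlet boundary pump gives
`n j = ⌈L j γ / (p_max - p_min)⌉ - (if j = 0 then 1 else 0)`.  Then the total
pump count `∑ n j` is the minimum over all section-respecting placements
(interior counts `pcnt j` with `L j ≤ (pcnt j + 1) D`, plus `k - 1` boundary
pumps); moreover `∑ n j ≥ ⌈(∑ L j) γ / (p_max - p_min)⌉ - 1`, the bound for
the undivided route, with equality when every section length is an integer
multiple of `(p_max - p_min)/γ`. -/
theorem segmentation_pump_count (k : ℕ) (hk : 0 < k)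
    (γ pmax pmin : ℝ) (L : Fin k → ℝ) (n : Fin k → ℤ)
    (hγ : 0 < γ) (hpp : pmin < pmax) (hL : ∀ j, 0 < L j)
    (hn : ∀ j : Fin k,
      n j = ⌈L j * γ / (pmax - pmin)⌉ - (if j = (⟨0, hk⟩ : Fin k) then 1 else 0)) :
    ((∀ pcnt : Fin k → ℕ,
        (∀ j, L j ≤ ((pcnt j : ℝ) + 1) * ((pmax - pmin) / γ)) →
        ∑ j, n j ≤ (∑ j, (pcnt j : ℤ)) + ((k : ℤ) - 1)) ∧
      (∃ pcnt : Fin k → ℕ,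
        (∀ j, L j ≤ ((pcnt j : ℝ) + 1) * ((pmax - pmin) / γ)) ∧
        ∑ j, n j = (∑ j, (pcnt j : ℤ)) + ((k : ℤ) - 1))) ∧
      (∑ j, n j ≥ ⌈(∑ j, L j) * γ / (pmax - pmin)⌉ - 1) ∧
      ((∀ j, ∃ m : ℕ, L j = (m : ℝ) * ((pmax - pmin) / γ)) →
        ∑ j, n j = ⌈(∑ j, L j) * γ / (pmax - pmin)⌉ - 1) := by
  have hd : (0:ℝ) < pmax - pmin := by linarith
  have hxpos : ∀ j, 0 < L j * γ / (pmax - pmin) := fun j => by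
    have := hL j; positivity
  have hceil1 : ∀ j, 1 ≤ ⌈L j * γ / (pmax - pmin)⌉ := fun j =>
    Int.one_le_ceil_iff.mpr (hxpos j)
  have hsum : ∑ j, n j = (∑ j, ⌈L j * γ / (pmax - pmin)⌉) - 1 := by
    simp only [hn]
    rw [Finset.sum_sub_distrib]
    congr 1
    simp
  have key : (∑ j, L j) * γ / (pmax - pmin) = ∑ j, L j * γ / (pmax - pmin) := by
    rw [Finset.sum_mul, Finset.sum_div]
  refine ⟨⟨?_, ?_⟩, ?_, ?_⟩
  · intro pcnt hp
    have h1 : ∀ j, ⌈L j * γ / (pmax - pmin)⌉ ≤ (pcnt j : ℤ) + 1 := by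
      intro j
      have h := mul_le_mul_of_nonneg_right (hp j) hγ.le
      rw [mul_assoc, div_mul_cancel₀ _ hγ.ne'] at h
      rw [Int.ceil_le]
      push_cast
      rw [div_le_iff₀ hd]
      exact h
    have h2 := Finset.sum_le_sum (fun j (_ : j ∈ Finset.univ) => h1 j)
    have h3 : ∑ j : Fin k, ((pcnt j : ℤ) + 1) = (∑ j, (pcnt j : ℤ)) + k := by
      rw [Finset.sum_add_distrib, Finset.sum_const, Finset.card_univ,
        Fintype.card_fin]
      simp
    rw [hsum]
    rw [h3] at h2
    linarith
  · refine ⟨fun j => (⌈L j * γ / (pmax - pmin)⌉ - 1).toNat, fun j => ?_, ?_⟩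
    · have hc : ((( ⌈L j * γ / (pmax - pmin)⌉ - 1).toNat : ℝ)) + 1
          = (⌈L j * γ / (pmax - pmin)⌉ : ℝ) := by
        have := hceil1 j
        rw [← Int.cast_natCast, Int.toNat_of_nonneg (by omega)]
        push_cast; ring
      rw [hc]
      have h := Int.le_ceil (L j * γ / (pmax - pmin))
      rw [div_le_iff₀ hd] at h
      rw [← mul_div_assoc, le_div_iff₀ hγ]
      exact h
    · rw [hsum]
      have h3 : ∀ j : Fin k, ((( ⌈L j * γ / (pmax - pmin)⌉ - 1).toNat : ℤ))
          = ⌈L j * γ / (pmax - pmin)⌉ - 1 := fun j =>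
        Int.toNat_of_nonneg (by have := hceil1 j; omega)
      rw [Finset.sum_congr rfl (fun j _ => h3 j), Finset.sum_sub_distrib,
        Finset.sum_const, Finset.card_univ, Fintype.card_fin]
      simp
  · rw [hsum, ge_iff_le]
    have h1 : ⌈(∑ j, L j) * γ / (pmax - pmin)⌉ ≤ ∑ j, ⌈L j * γ / (pmax - pmin)⌉ := by
      rw [key, Int.ceil_le]
      push_cast
      exact Finset.sum_le_sum fun j _ => Int.le_ceil _
    omega
  · intro h
    choose m hm using h
    have hx : ∀ j, L j * γ / (pmax - pmin) = (m j : ℝ) := by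
      intro j
      rw [hm j]
      field_simp
    rw [hsum, key]
    have h1 : ∀ j : Fin k, ⌈L j * γ / (pmax - pmin)⌉ = (m j : ℤ) := fun j => by
      rw [hx j]; exact_mod_cast Int.ceil_intCast (m j : ℤ)
    rw [Finset.sum_congr rfl (fun j _ => h1 j),
      Finset.sum_congr rfl (fun j _ => hx j)]
    have : ⌈(∑ j : Fin k, ((m j : ℝ)))⌉ = ∑ j, (m j : ℤ) := by
      push_cast
      exact_mod_cast Int.ceil_intCast (∑ j, (m j : ℤ))
    rw [this]
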